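/- For every ε with 0 < ε < 2, there exist a number of agents N and an instance with two projects whose valuations v_1, v_2 are monotone, anonymous, and subadditive (with v_k(∅)=0), such that every stable pair (S, p) satisfies Σ_{i∈𝒩} p_i > (2−ε)·SW(S). Consequently, for this instance no (2−ε)-budget-balanced stable solution exists, i.e., no (2−ε, c)-core stable solution exists for any c. -/
import Mathlib


/-- Lower bound: for every `0 < ε < 2` there is an instance with two projects whose
valuations are monotone, anonymous, and subadditive, such that every stable solution
has total payments strictly larger than `(2 - ε)` times its social welfare; hence no
`(2-ε, c)`-core stable solution exists for any `c`. -/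
theorem stmt4 (ε : ℝ) (hε0 : 0 < ε) (hε2 : ε < 2) :
    ∃ (N : ℕ) (v : Fin 2 → Finset (Fin N) → ℝ),
      (∀ k, v k ∅ = 0) ∧
      (∀ k (T : Finset (Fin N)), 0 ≤ v k T) ∧
      -- monotone
      (∀ k (A B : Finset (Fin N)), A ⊆ B → v k A ≤ v k B) ∧
      -- anonymous
      (∀ k (A B : Finset (Fin N)), A.card = B.card → v k A = v k B) ∧
      -- subadditive
      (∀ k (A B : Finset (Fin N)), v k (A ∪ B) ≤ v k A + v k B) ∧
      -- every stable pair has payments exceeding (2-ε) times its welfare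
      (∀ (S : Fin 2 → Finset (Fin N)) (p : Fin N → ℝ),
        (∀ k l, k ≠ l → Disjoint (S k) (S l)) →
        Finset.univ.biUnion S = Finset.univ →
        (∀ i, 0 ≤ p i) →
        (∀ k (T : Finset (Fin N)), v k (S k ∪ T) ≤ ∑ i ∈ S k ∪ T, p i) →
        (2 - ε) * ∑ k, v k (S k) < ∑ i, p i) := by
  set N := ⌈(20:ℝ)/ε⌉₊ with hNdef
  have hNε : (20:ℝ)/ε ≤ N := Nat.le_ceil _
  have hNε' : (20:ℝ) ≤ N * ε := by
    rw [div_le_iff₀ hε0] at hNε; linarith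
  have hN10 : (10:ℝ) < N := by
    have : (10:ℝ) < 20/ε := by rw [lt_div_iff₀ hε0]; nlinarith
    linarith
  have hNpos : 0 < N := by exact_mod_cast lt_trans (by norm_num : (0:ℝ) < 10) hN10
  refine ⟨N, fun k T => if k = 0 then (if T.card = 0 then 0 else if T.card < N then 1 else 2)
    else (if T.card = 0 then 0 else ε/4), ?_, ?_, ?_, ?_, ?_, ?_⟩
  · intro k; fin_cases k <;> simp
  · intro k T; fin_cases k <;> simp <;> split_ifs <;> first | linarith | norm_num
  · intro k A B hAB
    have hc := Finset.card_le_card hAB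
    fin_cases k <;> simp <;> split_ifs <;>
      first
        | linarith
        | (exfalso; simp only [← Finset.card_eq_zero] at *; omega)
  · intro k A B h; fin_cases k <;> simp [h]
  · intro k A B
    have hc := Finset.card_union_le A B
    fin_cases k <;> simp <;> split_ifs <;>
      first
        | linarith
        | (exfalso; simp only [← Finset.card_eq_zero] at *; omega)
  · intro S p hdisj hcover hp hstab
    have hAB : S 0 ∪ S 1 = Finset.univ := by
      rw [← hcover]; ext x; simp [Fin.exists_fin_two]
    have hred : ∑ k : Fin 2, (fun k (T : Finset (Fin N)) => if k = 0 then (if T.card = 0 then (0:ℝ) else if T.card < N then 1 else 2)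
        else (if T.card = 0 then 0 else ε/4)) k (S k)
        = (if (S 0).card = 0 then (0:ℝ) else if (S 0).card < N then 1 else 2)
          + (if (S 1).card = 0 then (0:ℝ) else ε/4) := by
      rw [Fin.sum_univ_two]
      norm_num
    rw [hred]
    by_cases h1 : S 1 = ∅
    · have hA : S 0 = Finset.univ := by rw [h1, Finset.union_empty] at hAB; exact hAB
      have key : ∀ i, ε/4 ≤ p i := by
        intro i
        have h := hstab 1 {i}
        rw [h1] at h
        simpa using h
      have hsum : (N:ℝ) * (ε/4) ≤ ∑ i, p i := by
        calc (N:ℝ)*(ε/4) = ∑ _i : Fin N, (ε/4) := by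
              rw [Finset.sum_const, Finset.card_univ, Fintype.card_fin, nsmul_eq_mul]
            _ ≤ ∑ i, p i := Finset.sum_le_sum fun i _ => key i
      rw [hA, h1]
      rw [Finset.card_univ, Fintype.card_fin, Finset.card_empty]
      rw [if_neg hNpos.ne', if_neg (lt_irrefl N), if_pos rfl]
      nlinarith
    · have hdisj01 := hdisj 0 1 (by decide)
      have hcards : (S 0).card + (S 1).card = N := by
        rw [← Finset.card_union_of_disjoint hdisj01, hAB, Finset.card_univ, Fintype.card_fin]
      have hb : 0 < (S 1).card := Finset.card_pos.mpr (Finset.nonempty_iff_ne_empty.mpr h1)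
      have ha : (S 0).card < N := by omega
      have h2le : (2:ℝ) ≤ ∑ i, p i := by
        have h := hstab 0 Finset.univ
        rw [Finset.union_eq_right.2 (Finset.subset_univ _)] at h
        simp only [Finset.card_univ, Fintype.card_fin] at h
        rw [if_pos trivial, if_neg hNpos.ne', if_neg (lt_irrefl N)] at h
        exact h
      have hv0 : (if (S 0).card = 0 then (0:ℝ) else if (S 0).card < N then 1 else 2) ≤ 1 := by
        split_ifs <;> first | norm_num | omega
      have hx0 : (0:ℝ) ≤ (if (S 0).card = 0 then (0:ℝ) else if (S 0).card < N then 1 else 2) := by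
        split_ifs <;> norm_num
      have hv1 : (if (S 1).card = 0 then (0:ℝ) else ε/4) = ε/4 := if_neg (by omega)
      rw [hv1]
      nlinarith [mul_le_mul_of_nonneg_left hv0 (by linarith : (0:ℝ) ≤ 2-ε), sq_nonneg ε]
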